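/- For all real p ≥ 2, q ≥ 2 and every integer k ≥ 2, one has p^{k-1} · q^{p - p^k} ≤ 2^{-k+2}. -/

import Mathlib

open Real

private lemma nat_ineq : ∀ k : ℕ, 2 ≤ k → 5 * k ≤ 2 * 2 ^ k + 3 := by
  intro k hk
  induction k with
  | zero => omega
  | succ n ih =>
    rcases Nat.lt_or_ge n 2 with h | h
    · interval_cases n <;> norm_num
    · have := ih h
      have : 2 ^ 2 ≤ 2 ^ n := Nat.pow_le_pow_right (by norm_num) h
      have : 2 ^ (n + 1) = 2 * 2 ^ n := by ring
      omega

private lemma geo (p : ℝ) (hp : 2 ≤ p) : ∀ k : ℕ, 1 ≤ k →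
    (p - 1) * ((2 : ℝ) ^ k - 2) ≤ p ^ k - p := by
  intro k hk
  induction k with
  | zero => omega
  | succ n ih =>
    rcases Nat.lt_or_ge n 1 with h | h
    · interval_cases n; simp
    · have h1 := ih h
      have h2 : (2 : ℝ) ^ 1 ≤ (2 : ℝ) ^ n := pow_le_pow_right₀ (by norm_num) h
      have h3 : (0 : ℝ) ≤ p ^ n - p := by nlinarith
      have h4 : p ^ (n + 1) = p * p ^ n := by ring
      have h5 : (2 : ℝ) ^ (n + 1) = 2 * 2 ^ n := by ring
      nlinarith [mul_le_mul_of_nonneg_left h3 (by linarith : (0:ℝ) ≤ p - 2)]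

/-- For all real `p ≥ 2`, `q ≥ 2` and every integer `k ≥ 2`,
`p^{k-1} · q^{p - p^k} ≤ 2^{-k+2}`. -/
theorem term_bound (p q : ℝ) (hp : 2 ≤ p) (hq : 2 ≤ q) (k : ℕ) (hk : 2 ≤ k) :
    p ^ ((k : ℝ) - 1) * q ^ (p - p ^ (k : ℝ)) ≤ (2 : ℝ) ^ (-(k : ℝ) + 2) := by
  have hp0 : (0 : ℝ) < p := by linarith
  have hq0 : (0 : ℝ) < q := by linarith
  rw [Real.rpow_natCast p k, Real.rpow_def_of_pos hp0, Real.rpow_def_of_pos hq0,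
    Real.rpow_def_of_pos (by norm_num : (0:ℝ) < 2), ← Real.exp_add, Real.exp_le_exp]
  -- goal: log p * (k-1) + log q * (p - p^k) ≤ log 2 * (-k + 2)
  have hpk : p ≤ p ^ k := le_self_pow₀ (by linarith) (by omega)
  have hlq : Real.log 2 ≤ Real.log q := Real.log_le_log (by norm_num) hq
  have h1 : Real.log q * (p - p ^ k) ≤ Real.log 2 * (p - p ^ k) :=
    mul_le_mul_of_nonpos_right hlq (by linarith)
  have hlp : Real.log p ≤ p - 1 := Real.log_le_sub_one_of_pos hp0
  have hlp0 : 0 ≤ Real.log p := Real.log_nonneg (by linarith)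
  have hl2 : (2 / 3 : ℝ) ≤ Real.log 2 := by
    have := Real.log_two_gt_d9; linarith
  have hgeo := geo p hp k (by omega)
  have hkR : (2 : ℝ) ≤ (k : ℝ) := by exact_mod_cast hk
  have hnat : (5 : ℝ) * k ≤ 2 * 2 ^ k + 3 := by exact_mod_cast nat_ineq k hk
  have h2k : ((k : ℝ)) ≤ 2 ^ k := by
    have : k ≤ 2 ^ k := (Nat.lt_two_pow_self (n := k)).le
    exact_mod_cast this
  -- chain: log p * (k-1) ≤ (p-1)*(k-1) ≤ (2/3)*(p-1)*(2^k - k) ≤ log2*(p^k - p - k + 2)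
  have key : Real.log p * ((k : ℝ) - 1) ≤ Real.log 2 * (p ^ k - p - (k : ℝ) + 2) := by
    have s1 : Real.log p * ((k : ℝ) - 1) ≤ (p - 1) * ((k : ℝ) - 1) := by
      apply mul_le_mul_of_nonneg_right hlp (by linarith)
    have s2 : (p - 1) * ((k : ℝ) - 1) ≤ (2 / 3) * ((p - 1) * (2 ^ k - (k : ℝ))) := by
      nlinarith [mul_le_mul_of_nonneg_left hnat (by linarith : (0:ℝ) ≤ p - 2)]
    have s3 : (2 / 3) * ((p - 1) * (2 ^ k - (k : ℝ))) ≤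
        Real.log 2 * (p ^ k - p - (k : ℝ) + 2) := by
      have hpos : (0 : ℝ) ≤ (p - 1) * (2 ^ k - (k : ℝ)) := by
        apply mul_nonneg <;> linarith
      have t1 : (p - 1) * (2 ^ k - (k : ℝ)) ≤ p ^ k - p - (k : ℝ) + 2 := by
        nlinarith
      calc (2 / 3) * ((p - 1) * (2 ^ k - (k : ℝ)))
          ≤ Real.log 2 * ((p - 1) * (2 ^ k - (k : ℝ))) :=
            mul_le_mul_of_nonneg_right hl2 hpos
        _ ≤ Real.log 2 * (p ^ k - p - (k : ℝ) + 2) :=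
            mul_le_mul_of_nonneg_left t1 (by linarith)
    linarith [s1, s2, s3]
  linarith
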